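/- Let f : ℝⁿ → ℝ be continuously differentiable with L_g-Lipschitz gradient and bounded below by f_inf ∈ ℝ. Fix constants η₁ ∈ (0,1), 0 < γ_dec < 1 < γ_inc, Δ_max > 0, κ_f, κ_g, κ_Δ, H_max > 0. Let (x_k) ⊂ ℝⁿ, (Δ_k) ⊂ (0, Δ_max], (g_k) ⊂ ℝⁿ, symmetric matrices (H_k) with ‖H_k‖₂ ≤ H_max, and steps (s_k) with ‖s_k‖₂ ≤ Δ_k be sequences such that for every k, with m_k(s) := f(x_k) + g_kᵀ s + (1/2) sᵀ H_k s: (i) |f(x_k + s) − m_k(s)| ≤ κ_f Δ_k² and ‖∇f(x_k + s) − ∇m_k(s)‖₂ ≤ κ_g Δ_k for all ‖s‖₂ ≤ Δ_k; (ii) ‖g_k‖₂ > κ_Δ Δ_k; (iii) pred_k := m_k(0) − m_k(s_k) ≥ (1/2) ‖g_k‖₂ min{Δ_k, ‖g_k‖₂ / ‖H_k‖₂} (with the convention ‖g_k‖₂/‖H_k‖₂ := +∞ when H_k = 0); (iv) if ρ_k := (f(x_k) − f(x_k + s_k)) / pred_k ≥ η₁ then x_{k+1} = x_k + s_k and Δ_k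 ≤ Δ_{k+1} ≤ min{γ_inc Δ_k, Δ_max}, while if ρ_k < η₁ then x_{k+1} = x_k and Δ_{k+1} = γ_dec Δ_k. Then liminf_{k→∞} ‖∇f(x_k)‖₂ = 0. -/

import Mathlib

open Matrix Filter
open scoped Matrix.Norms.L2Operator RealInnerProductSpace

set_option maxHeartbeats 1000000 in
theorem stmt18 (n : ℕ)
    (f : EuclideanSpace ℝ (Fin n) → ℝ) (hf : ContDiff ℝ 1 f)
    (Lg : ℝ) (hLg : 0 < Lg)
    (hlip : ∀ a c : EuclideanSpace ℝ (Fin n),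
      ‖gradient f a - gradient f c‖ ≤ Lg * ‖a - c‖)
    (finf : ℝ) (hbdd : ∀ z, finf ≤ f z)
    (η₁ γdec γinc Δmax κf κg κΔ Hmax : ℝ)
    (hη₁ : η₁ ∈ Set.Ioo (0 : ℝ) 1) (hγdec0 : 0 < γdec) (hγdec1 : γdec < 1)
    (hγinc : 1 < γinc) (hΔmax : 0 < Δmax)
    (hκf : 0 < κf) (hκg : 0 < κg) (hκΔ : 0 < κΔ) (hHmax : 0 < Hmax)
    (x : ℕ → EuclideanSpace ℝ (Fin n)) (Δ : ℕ → ℝ)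
    (g : ℕ → EuclideanSpace ℝ (Fin n)) (H : ℕ → Matrix (Fin n) (Fin n) ℝ)
    (s : ℕ → EuclideanSpace ℝ (Fin n))
    (hΔpos : ∀ k, 0 < Δ k) (hΔle : ∀ k, Δ k ≤ Δmax)
    (hHsymm : ∀ k, (H k).IsSymm) (hHb : ∀ k, ‖H k‖ ≤ Hmax)
    (hs : ∀ k, ‖s k‖ ≤ Δ k)
    (mdl : ℕ → EuclideanSpace ℝ (Fin n) → ℝ)
    (hmdl : mdl = fun k v => f (x k) + ⟪g k, v⟫ +
      (1 / 2) * ⟪v, Matrix.toEuclideanLin (H k) v⟫)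
    (hfl1 : ∀ k, ∀ v : EuclideanSpace ℝ (Fin n), ‖v‖ ≤ Δ k →
      |f (x k + v) - mdl k v| ≤ κf * Δ k ^ 2)
    (hfl2 : ∀ k, ∀ v : EuclideanSpace ℝ (Fin n), ‖v‖ ≤ Δ k →
      ‖gradient f (x k + v) - (g k + Matrix.toEuclideanLin (H k) v)‖ ≤ κg * Δ k)
    (hg : ∀ k, κΔ * Δ k < ‖g k‖)
    (hpred : ∀ k, (1 / 2) * ‖g k‖ *
      (if H k = 0 then Δ k else min (Δ k) (‖g k‖ / ‖H k‖)) ≤ mdl k 0 - mdl k (s k))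
    (hupd : ∀ k,
      (η₁ ≤ (f (x k) - f (x k + s k)) / (mdl k 0 - mdl k (s k)) →
        x (k + 1) = x k + s k ∧ Δ k ≤ Δ (k + 1) ∧ Δ (k + 1) ≤ min (γinc * Δ k) Δmax) ∧
      ((f (x k) - f (x k + s k)) / (mdl k 0 - mdl k (s k)) < η₁ →
        x (k + 1) = x k ∧ Δ (k + 1) = γdec * Δ k)) :
    liminf (fun k => ‖gradient f (x k)‖) atTop = 0 := by
  have hη₁0 : 0 < η₁ := hη₁.1
  have hη₁1 : η₁ < 1 := hη₁.2
  have hgnorm : ∀ k, 0 < ‖g k‖ := fun k =>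
    lt_of_le_of_lt (mul_pos hκΔ (hΔpos k)).le (hg k)
  have hm0 : ∀ k, mdl k 0 = f (x k) := by intro k; simp [hmdl]
  have hgf : ∀ k, ‖gradient f (x k) - g k‖ ≤ κg * Δ k := by
    intro k
    have h := hfl2 k 0 (by simpa using (hΔpos k).le)
    simpa using h
  have predlb : ∀ k, (1/2) * ‖g k‖ * min (Δ k) (‖g k‖ / Hmax) ≤ mdl k 0 - mdl k (s k) := by
    intro k
    refine le_trans ?_ (hpred k)
    have h2 : (0:ℝ) ≤ (1/2) * ‖g k‖ := by positivity
    by_cases hH : H k = 0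
    · rw [if_pos hH]
      exact mul_le_mul_of_nonneg_left (min_le_left _ _) h2
    · rw [if_neg hH]
      refine mul_le_mul_of_nonneg_left (min_le_min le_rfl ?_) h2
      exact div_le_div_of_nonneg_left (norm_nonneg _) (norm_pos_iff.2 hH) (hHb k)
  have Ppos : ∀ k, 0 < mdl k 0 - mdl k (s k) := by
    intro k
    refine lt_of_lt_of_le ?_ (predlb k)
    have h1 : 0 < min (Δ k) (‖g k‖ / Hmax) := lt_min (hΔpos k) (div_pos (hgnorm k) hHmax)
    have h2 := hgnorm k
    positivity
  have hmono : ∀ k, f (x (k+1)) ≤ f (x k) := by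
    intro k
    rcases le_or_gt η₁ ((f (x k) - f (x k + s k)) / (mdl k 0 - mdl k (s k))) with hsucc | hfail
    · have hx := ((hupd k).1 hsucc).1
      have hq : η₁ * (mdl k 0 - mdl k (s k)) ≤ f (x k) - f (x k + s k) :=
        (le_div_iff₀ (Ppos k)).1 hsucc
      have hpos : 0 ≤ η₁ * (mdl k 0 - mdl k (s k)) := le_of_lt (mul_pos hη₁0 (Ppos k))
      rw [hx]; linarith
    · rw [((hupd k).2 hfail).1]
  have hmono' : ∀ a b : ℕ, a ≤ b → f (x b) ≤ f (x a) := by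
    intro a b hab
    induction b, hab using Nat.le_induction with
    | base => exact le_rfl
    | succ b hb ih => exact le_trans (hmono b) ih
  have key : ∀ ε : ℝ, 0 < ε → ∃ᶠ k in atTop, ‖gradient f (x k)‖ < ε := by
    intro ε hε
    by_contra hcon
    rw [not_frequently] at hcon
    have hcon' : ∀ᶠ k in atTop, ε ≤ ‖gradient f (x k)‖ := hcon.mono (fun k h => not_lt.1 h)
    obtain ⟨K, hK⟩ := eventually_atTop.1 hcon'
    set δs : ℝ := min (ε/(2*κg)) (min (ε/(2*Hmax)) ((1-η₁)*ε/(4*κf))) with hδs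
    have h1η : 0 < 1 - η₁ := by linarith
    have hδspos : 0 < δs := by
      refine lt_min (by positivity) (lt_min (by positivity) (by positivity))
    have succdrop : ∀ k, K ≤ k → Δ k ≤ δs →
        η₁ * (mdl k 0 - mdl k (s k)) ≤ f (x k) - f (x k + s k) := by
      intro k hk hΔ
      have h1 : Δ k ≤ ε / (2*κg) := le_trans hΔ (min_le_left _ _)
      have h2 : Δ k ≤ ε / (2*Hmax) := le_trans hΔ (le_trans (min_le_right _ _) (min_le_left _ _))
      have h3 : Δ k ≤ (1-η₁)*ε/(4*κf) := le_trans hΔ (le_trans (min_le_right _ _) (min_le_right _ _))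
      have hge : ε / 2 ≤ ‖g k‖ := by
        have hb := hgf k
        have hKk := hK k hk
        have hns : ‖gradient f (x k)‖ - ‖g k‖ ≤ ‖gradient f (x k) - g k‖ := norm_sub_norm_le _ _
        have hκ : κg * Δ k ≤ ε/2 := by
          rw [le_div_iff₀ (by positivity : (0:ℝ) < 2*κg)] at h1
          nlinarith
        linarith
      have hmin2 : Δ k ≤ ‖g k‖ / Hmax := by
        rw [le_div_iff₀ hHmax]
        rw [le_div_iff₀ (by positivity : (0:ℝ) < 2*Hmax)] at h2
        nlinarith
      have hPl : ε/4 * Δ k ≤ mdl k 0 - mdl k (s k) := by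
        have hp := predlb k
        rw [min_eq_left hmin2] at hp
        nlinarith [hΔpos k]
      have herr := abs_le.1 (hfl1 k (s k) (hs k))
      have herr' : (mdl k 0 - mdl k (s k)) - κf * Δ k ^ 2 ≤ f (x k) - f (x k + s k) := by
        have hme := hm0 k
        have := herr.2
        linarith
      have hquad : κf * Δ k ^ 2 ≤ (1-η₁) * (mdl k 0 - mdl k (s k)) := by
        have h4 : κf * Δ k ≤ (1-η₁)*ε/4 := by
          rw [le_div_iff₀ (by positivity : (0:ℝ) < 4*κf)] at h3
          nlinarith
        nlinarith [hΔpos k, hPl]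
      linarith
    set δm : ℝ := min (Δ K) (γdec * δs) with hδm
    have hδmpos : 0 < δm := lt_min (hΔpos K) (mul_pos hγdec0 hδspos)
    have hlb : ∀ k, K ≤ k → δm ≤ Δ k := by
      intro k hk
      induction k, hk using Nat.le_induction with
      | base => exact min_le_left _ _
      | succ k hk ih =>
        rcases le_or_gt η₁ ((f (x k) - f (x k + s k)) / (mdl k 0 - mdl k (s k))) with hsucc | hfail
        · exact le_trans ih ((hupd k).1 hsucc).2.1
        · have hΔeq := ((hupd k).2 hfail).2
          have hgt : δs < Δ k := by
            by_contra h
            push_neg at h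
            have hd := succdrop k hk h
            have : η₁ ≤ (f (x k) - f (x k + s k)) / (mdl k 0 - mdl k (s k)) :=
              (le_div_iff₀ (Ppos k)).2 hd
            exact absurd this (not_le.2 hfail)
          rw [hΔeq]
          calc δm ≤ γdec * δs := min_le_right _ _
            _ ≤ γdec * Δ k := by nlinarith
    have hsucc_ex : ∀ k, K ≤ k → ∃ j, k ≤ j ∧
        η₁ ≤ (f (x j) - f (x j + s j)) / (mdl j 0 - mdl j (s j)) := by
      intro k hk
      by_contra hall
      push_neg at hall
      have hgeo : ∀ m : ℕ, Δ (k + m) = γdec ^ m * Δ k := by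
        intro m
        induction m with
        | zero => simp
        | succ m ih =>
          have hfail := hall (k + m) (Nat.le_add_right _ _)
          have hΔeq := ((hupd (k+m)).2 hfail).2
          rw [show k + (m+1) = (k+m)+1 from rfl, hΔeq, ih]
          ring
      obtain ⟨m, hm⟩ := exists_pow_lt_of_lt_one (div_pos hδmpos (hΔpos k)) hγdec1
      have hlt : γdec ^ m * Δ k < δm := (lt_div_iff₀ (hΔpos k)).1 hm
      have hlbk := hlb (k+m) (le_trans hk (Nat.le_add_right _ _))
      rw [hgeo m] at hlbk
      linarith
    have hminpos : 0 < min δm (κΔ * δm / Hmax) := lt_min hδmpos (by positivity)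
    set c : ℝ := η₁ * ((1/2) * (κΔ * δm) * min δm (κΔ * δm / Hmax)) with hc
    have hcpos : 0 < c :=
      mul_pos hη₁0 (mul_pos (mul_pos (by norm_num) (mul_pos hκΔ hδmpos)) hminpos)
    have hdrop : ∀ j, K ≤ j →
        η₁ ≤ (f (x j) - f (x j + s j)) / (mdl j 0 - mdl j (s j)) →
        f (x (j+1)) ≤ f (x j) - c := by
      intro j hj hsucc
      have hx := ((hupd j).1 hsucc).1
      have hq : η₁ * (mdl j 0 - mdl j (s j)) ≤ f (x j) - f (x j + s j) :=
        (le_div_iff₀ (Ppos j)).1 hsucc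
      have hΔj : δm ≤ Δ j := hlb j hj
      have hgj : κΔ * δm ≤ ‖g j‖ := le_trans (by nlinarith) (hg j).le
      have hminle : min δm (κΔ * δm / Hmax) ≤ min (Δ j) (‖g j‖ / Hmax) :=
        min_le_min hΔj (by gcongr)
      have h1 : (1/2) * (κΔ * δm) * min δm (κΔ*δm/Hmax) ≤ (1/2) * ‖g j‖ * min (Δ j) (‖g j‖/Hmax) := by
        apply mul_le_mul
        · exact mul_le_mul_of_nonneg_left hgj (by norm_num)
        · exact hminle
        · exact le_of_lt hminpos
        · positivity
      have h2 : c ≤ η₁ * (mdl j 0 - mdl j (s j)) := by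
        rw [hc]
        exact mul_le_mul_of_nonneg_left (le_trans h1 (predlb j)) hη₁0.le
      rw [hx]; linarith
    have hiter : ∀ N : ℕ, ∃ k, K ≤ k ∧ f (x k) ≤ f (x K) - N * c := by
      intro N
      induction N with
      | zero => exact ⟨K, le_rfl, by simp⟩
      | succ N ih =>
        obtain ⟨k, hk, hfk⟩ := ih
        obtain ⟨j, hj, hsucc⟩ := hsucc_ex k hk
        have hKj : K ≤ j := le_trans hk hj
        refine ⟨j+1, le_trans hKj (Nat.le_succ _), ?_⟩
        have h1 := hdrop j hKj hsucc
        have h2 := hmono' k j hj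
        push_cast
        linarith
    obtain ⟨N, hN⟩ := exists_nat_gt ((f (x K) - finf) / c)
    obtain ⟨k, hk, hfk⟩ := hiter N
    have hNc : f (x K) - finf < N * c := (div_lt_iff₀ hcpos).1 hN
    linarith [hbdd (x k)]
  have hbd : IsBoundedUnder (· ≥ ·) atTop (fun k => ‖gradient f (x k)‖) :=
    isBoundedUnder_of ⟨0, fun k => norm_nonneg _⟩
  refine le_antisymm ?_ ?_
  · refine le_of_forall_pos_le_add ?_
    intro ε hε
    have := liminf_le_of_frequently_le ((key ε hε).mono (fun k h => h.le)) hbd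
    linarith
  · refine le_liminf_of_le ?_ (Eventually.of_forall (fun k => norm_nonneg _))
    exact IsCoboundedUnder.of_frequently_le ((key 1 one_pos).mono (fun k h => h.le))
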